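/- Let G and H be finite graphs with the same number of vertices. If G and H have a common equitable partition, then there exists a doubly stochastic matrix P such that P·N_G = N_H·P, where N_G and N_H are the adjacency matrices of G and H. Moreover, P can be taken as the block-diagonal matrix whose block corresponding to partition class i is (1/|P_i|)·J, the uniform matrix with all entries 1/|P_i|. -/

import Mathlib

open Matrix BigOperators Finset

/-- A (possibly rectangular) real matrix is doubly stochastic if it has non-negative
entries and all rows and columns sum to 1. -/
def IsDoublyStochasticRect {V W : Type*} [Fintype V] [Fintype W] (M : Matrix V W ℝ) : Prop :=
  (∀ v w, 0 ≤ M v w) ∧ (∀ v, ∑ w, M v w = 1) ∧ (∀ w, ∑ v, M v w = 1)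

/-- A colouring `c : V → I` of the vertices of a graph `G` is an equitable partition
with parameters `par` if every vertex of colour `i` has exactly `par i j` neighbours
of colour `j`. -/
def IsEquitable {V I : Type*} [Fintype V] [DecidableEq V] [DecidableEq I]
    (G : SimpleGraph V) [DecidableRel G.Adj] (c : V → I) (par : I → I → ℕ) : Prop :=
  ∀ (v : V) (j : I), ((G.neighborFinset v).filter (fun w => c w = j)).card = par (c v) j


lemma sum_indicator_const {V : Type*} [Fintype V] (p : V → Prop) [DecidablePred p] (c : ℝ) :
    ∑ v : V, (if p v then c else 0) = ((Finset.univ.filter p).card : ℝ) * c := by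
  rw [← Finset.sum_filter, Finset.sum_const, nsmul_eq_mul]

lemma IsEquitable.double_count {V I : Type*} [Fintype V] [DecidableEq V] [DecidableEq I]
    (G : SimpleGraph V) [DecidableRel G.Adj] (c : V → I) (par : I → I → ℕ)
    (h : ∀ (v : V) (j : I), ((G.neighborFinset v).filter (fun w => c w = j)).card = par (c v) j)
    (i j : I) :
    (Finset.univ.filter (fun v => c v = i)).card * par i j
      = (Finset.univ.filter (fun v => c v = j)).card * par j i := by
  have key : ∀ i j : I, (Finset.univ.filter (fun v => c v = i)).card * par i j
      = ∑ v : V, ∑ u : V, (if c v = i ∧ c u = j ∧ G.Adj v u then 1 else 0) := by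
    intro i j
    have h1 : ∀ v : V, ((G.neighborFinset v).filter (fun u => c u = j)).card
        = ∑ u : V, (if c u = j ∧ G.Adj v u then 1 else 0) := by
      intro v
      rw [SimpleGraph.neighborFinset_eq_filter, Finset.filter_filter, Finset.card_filter]
      exact Finset.sum_congr rfl fun u _ => by by_cases h1 : G.Adj v u <;> by_cases h2 : c u = j <;> simp [h1, h2]
    calc (Finset.univ.filter (fun v => c v = i)).card * par i j
        = ∑ v ∈ Finset.univ.filter (fun v => c v = i), par i j := by
          rw [Finset.sum_const, smul_eq_mul]
      _ = ∑ v ∈ Finset.univ.filter (fun v => c v = i),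
            ∑ u : V, (if c u = j ∧ G.Adj v u then 1 else 0) := by
          refine Finset.sum_congr rfl fun v hv => ?_
          have hcv : c v = i := (Finset.mem_filter.mp hv).2
          rw [← h1 v, h v j, hcv]
      _ = ∑ v : V, ∑ u : V, (if c v = i ∧ c u = j ∧ G.Adj v u then 1 else 0) := by
          rw [Finset.sum_filter]
          refine Finset.sum_congr rfl fun v _ => ?_
          by_cases hv : c v = i
          · simp [hv]
          · simp [hv]
  rw [key i j, key j i, Finset.sum_comm]
  refine Finset.sum_congr rfl fun u _ => Finset.sum_congr rfl fun v _ => ?_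
  congr 1
  simp only [eq_iff_iff]
  constructor
  · rintro ⟨a, b, hadj⟩; exact ⟨b, a, hadj.symm⟩
  · rintro ⟨a, b, hadj⟩; exact ⟨b, a, hadj.symm⟩

/-- If `G` and `H` have a common equitable partition (equitable partitions with the same
index set, the same parameters and corresponding classes of equal sizes), then there is a
doubly stochastic matrix `P` with `P·N_G = N_H·P`; moreover `P` can be taken to be the
block matrix whose entry at `(w,v)` is `1/|class of v|` if `v` and `w` are in corresponding
classes and `0` otherwise. -/
theorem stmt4 {V W I : Type*} [Fintype V] [Fintype W] [DecidableEq V] [DecidableEq W]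
    [Fintype I] [DecidableEq I]
    (G : SimpleGraph V) (H : SimpleGraph W) [DecidableRel G.Adj] [DecidableRel H.Adj]
    (cG : V → I) (cH : W → I) (par : I → I → ℕ)
    (hG : IsEquitable G cG par) (hH : IsEquitable H cH par)
    (hsize : ∀ i : I,
      (Finset.univ.filter (fun v => cG v = i)).card =
        (Finset.univ.filter (fun w => cH w = i)).card) :
    ∃ P : Matrix W V ℝ,
      IsDoublyStochasticRect P ∧
      P * G.adjMatrix ℝ = H.adjMatrix ℝ * P ∧
      P = fun w v =>
        if cH w = cG v then
          1 / ((Finset.univ.filter (fun v' => cG v' = cG v)).card : ℝ)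
        else 0 := by
  set n : I → ℕ := fun i => (Finset.univ.filter (fun v => cG v = i)).card with hn
  have hposG : ∀ v : V, 0 < n (cG v) := fun v =>
    Finset.card_pos.mpr ⟨v, Finset.mem_filter.mpr ⟨Finset.mem_univ v, rfl⟩⟩
  have hposH : ∀ w : W, 0 < n (cH w) := fun w => by
    show 0 < (Finset.univ.filter (fun v => cG v = cH w)).card
    rw [hsize (cH w)]
    exact Finset.card_pos.mpr ⟨w, Finset.mem_filter.mpr ⟨Finset.mem_univ w, rfl⟩⟩
  have hGne : ∀ v : V, ((n (cG v) : ℝ)) ≠ 0 := fun v => Nat.cast_ne_zero.mpr (hposG v).ne'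
  have hHne : ∀ w : W, ((n (cH w) : ℝ)) ≠ 0 := fun w => Nat.cast_ne_zero.mpr (hposH w).ne'
  refine ⟨fun w v => if cH w = cG v then 1 / (n (cG v) : ℝ) else 0, ⟨?_, ?_, ?_⟩, ?_, rfl⟩
  · intro w v
    by_cases h : cH w = cG v <;> simp [h]
  · intro w
    have key : ∀ v : V, (if cH w = cG v then 1 / (n (cG v) : ℝ) else 0)
        = (if cG v = cH w then 1 / (n (cH w) : ℝ) else 0) := by
      intro v
      by_cases h : cH w = cG v
      · rw [if_pos h, if_pos h.symm, h]
      · rw [if_neg h, if_neg (fun hh => h hh.symm)]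
    simp only [key]
    rw [sum_indicator_const, mul_one_div]
    have hc : ((Finset.univ.filter (fun x => cG x = cH w)).card : ℝ) = (n (cH w) : ℝ) := rfl
    rw [hc, div_self (hHne w)]
  · intro v
    simp only
    rw [sum_indicator_const, mul_one_div]
    have hc : ((Finset.univ.filter (fun x => cH x = cG v)).card : ℝ) = (n (cG v) : ℝ) := by
      show _ = ((Finset.univ.filter (fun x => cG x = cG v)).card : ℝ)
      rw [hsize (cG v)]
    rw [hc, div_self (hGne v)]
  · ext w v
    erw [Matrix.mul_apply, Matrix.mul_apply]
    have hL : ∑ u : V, (if cH w = cG u then 1 / (n (cG u) : ℝ) else 0) * (G.adjMatrix ℝ) u v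
        = (par (cG v) (cH w) : ℝ) / (n (cH w) : ℝ) := by
      have key : ∀ u : V, (if cH w = cG u then 1 / (n (cG u) : ℝ) else 0) * (G.adjMatrix ℝ) u v
          = (if cG u = cH w ∧ G.Adj v u then 1 / (n (cH w) : ℝ) else 0) := by
        intro u
        rw [SimpleGraph.adjMatrix_apply]
        by_cases h1 : cG u = cH w
        · by_cases h2 : G.Adj u v
          · rw [if_pos h1.symm, if_pos h2, if_pos ⟨h1, h2.symm⟩, mul_one, h1]
          · rw [if_pos h1.symm, if_neg h2, mul_zero,
              if_neg (fun hc => h2 hc.2.symm)]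
        · rw [if_neg (fun hh => h1 hh.symm), zero_mul, if_neg (fun hc => h1 hc.1)]
      simp only [key]
      rw [sum_indicator_const]
      have hcard := hG v (cH w)
      rw [SimpleGraph.neighborFinset_eq_filter, Finset.filter_filter] at hcard
      have heq : (Finset.univ.filter (fun u => cG u = cH w ∧ G.Adj v u))
          = (Finset.univ.filter (fun u => G.Adj v u ∧ cG u = cH w)) := by
        apply Finset.filter_congr; intro u _; constructor <;> (rintro ⟨a, b⟩; exact ⟨b, a⟩)
      rw [heq, hcard, mul_one_div]
    have hR : ∑ x : W, (H.adjMatrix ℝ) w x * (if cH x = cG v then 1 / (n (cG v) : ℝ) else 0)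
        = (par (cH w) (cG v) : ℝ) / (n (cG v) : ℝ) := by
      have key : ∀ x : W, (H.adjMatrix ℝ) w x * (if cH x = cG v then 1 / (n (cG v) : ℝ) else 0)
          = (if H.Adj w x ∧ cH x = cG v then 1 / (n (cG v) : ℝ) else 0) := by
        intro x
        rw [SimpleGraph.adjMatrix_apply]
        by_cases h1 : H.Adj w x
        · by_cases h2 : cH x = cG v
          · rw [if_pos h1, if_pos h2, if_pos ⟨h1, h2⟩, one_mul]
          · rw [if_pos h1, if_neg h2, mul_zero, if_neg (fun hc => h2 hc.2)]
        · rw [if_neg h1, zero_mul, if_neg (fun hc => h1 hc.1)]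
      simp only [key]
      rw [sum_indicator_const]
      have hcard := hH w (cG v)
      rw [SimpleGraph.neighborFinset_eq_filter, Finset.filter_filter] at hcard
      rw [hcard, mul_one_div]
    rw [hL, hR]
    rw [div_eq_div_iff (hHne w) (hGne v)]
    have hdc : n (cG v) * par (cG v) (cH w) = n (cH w) * par (cH w) (cG v) :=
      IsEquitable.double_count G cG par hG (cG v) (cH w)
    exact_mod_cast ((Nat.mul_comm _ _).trans hdc).trans (Nat.mul_comm _ _)
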